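/- Let G be a finite group and χ an irreducible complex character of G with χ(1) = 4. Then χ(g) ≠ 0 for every 2-regular element g of G (every g of odd order). In particular, χ is a quasi 2-Steinberg character of G. -/

import Mathlib

open CategoryTheory Polynomial

/-- A root of the characteristic polynomial of a matrix `M` with `M ^ n = 1`
satisfies `μ ^ n = 1`. -/
lemma aux_root_pow_eq_one {m : Type} [Fintype m] [DecidableEq m]
    (M : Matrix m m ℂ) (n : ℕ) (hn0 : n ≠ 0) (hM : M ^ n = 1)
    {μ : ℂ} (hμ : μ ∈ M.charpoly.roots) : μ ^ n = 1 := by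
  have hroot : M.charpoly.IsRoot μ := isRoot_of_mem_roots hμ
  have hdet : ((M.charmatrix).map (Polynomial.eval μ)).det = 0 := by
    have := _root_.eval_det (M.charmatrix) μ
    rw [Matrix.charpoly] at hroot
    rw [hroot.eq_zero] at this
    rw [_root_.matPolyEquiv_eval_eq_map] at this
    exact this.symm
  obtain ⟨v, hv0, hv⟩ := (Matrix.exists_mulVec_eq_zero_iff.mpr hdet)
  have hmv : M.mulVec v = μ • v := by
    have hmap : (M.charmatrix).map (Polynomial.eval μ) = μ • (1 : Matrix m m ℂ) - M := by
      ext i j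
      by_cases h : i = j
      · subst h
        simp [Matrix.charmatrix_apply_eq, Matrix.one_apply]
      · simp [Matrix.charmatrix_apply_ne _ _ _ h, Matrix.one_apply, h]
    rw [hmap, Matrix.sub_mulVec, sub_eq_zero] at hv
    rw [← hv, Matrix.smul_mulVec, Matrix.one_mulVec]
  have hpow : ∀ k : ℕ, (M ^ k).mulVec v = (μ ^ k) • v := by
    intro k
    induction k with
    | zero => simp [Matrix.one_mulVec]
    | succ k ih =>
        rw [pow_succ, pow_succ, ← Matrix.mulVec_mulVec, hmv,
          Matrix.mulVec_smul, ih, mul_comm, smul_smul]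
  have := hpow n
  rw [hM, Matrix.one_mulVec] at this
  obtain ⟨i, hi⟩ := Function.ne_iff.mp hv0
  have hvi : v i = (μ ^ n) * v i := by
    conv_lhs => rw [this]
    simp
  have h2 : (μ ^ n - 1) * v i = 0 := by linear_combination -hvi
  rcases mul_eq_zero.mp h2 with h | h
  · exact sub_eq_zero.mp h
  · exact absurd h hi

/-- If four `n`-th roots of unity (`n` odd) sum to zero, so do their squares. -/
lemma aux_sq_sum (n : ℕ) (hn : Odd n) (hn0 : n ≠ 0) (a b c d : ℂ)
    (ha : a ^ n = 1) (hb : b ^ n = 1) (hc : c ^ n = 1) (hd : d ^ n = 1)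
    (h : a + b + c + d = 0) : a ^ 2 + b ^ 2 + c ^ 2 + d ^ 2 = 0 := by
  haveI : NeZero n := ⟨hn0⟩
  have hpos : 0 < n := Nat.pos_of_ne_zero hn0
  set ξ : ℂ := Complex.exp (2 * Real.pi * Complex.I / n) with hξdef
  have hξ : IsPrimitiveRoot ξ n := Complex.isPrimitiveRoot_exp n hn0
  obtain ⟨i, -, hi⟩ := hξ.eq_pow_of_pow_eq_one ha
  obtain ⟨j, -, hj⟩ := hξ.eq_pow_of_pow_eq_one hb
  obtain ⟨k, -, hk⟩ := hξ.eq_pow_of_pow_eq_one hc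
  obtain ⟨l, -, hl⟩ := hξ.eq_pow_of_pow_eq_one hd
  set P : Polynomial ℚ := X ^ i + X ^ j + X ^ k + X ^ l with hP
  have haevalξ : (aeval ξ) P = 0 := by
    simp only [hP, map_add, aeval_X_pow]
    rw [hi, hj, hk, hl]
    exact h
  have hdvd : minpoly ℚ ξ ∣ P := minpoly.dvd ℚ ξ haevalξ
  have hξ2 : IsPrimitiveRoot (ξ ^ 2) n := hξ.pow_of_coprime 2 (Nat.coprime_two_left.mpr hn)
  have hmin : minpoly ℚ ξ = minpoly ℚ (ξ ^ 2) := by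
    rw [← Polynomial.cyclotomic_eq_minpoly_rat hξ hpos,
      ← Polynomial.cyclotomic_eq_minpoly_rat hξ2 hpos]
  have haeval2 : (aeval (ξ ^ 2)) P = 0 := by
    obtain ⟨Q, hQ⟩ := hdvd
    rw [hQ, map_mul, hmin, minpoly.aeval, zero_mul]
  have : (ξ ^ 2) ^ i + (ξ ^ 2) ^ j + (ξ ^ 2) ^ k + (ξ ^ 2) ^ l = 0 := by
    simpa only [hP, map_add, aeval_X_pow] using haeval2
  calc a ^ 2 + b ^ 2 + c ^ 2 + d ^ 2
      = (ξ ^ 2) ^ i + (ξ ^ 2) ^ j + (ξ ^ 2) ^ k + (ξ ^ 2) ^ l := by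
        rw [← hi, ← hj, ← hk, ← hl]; ring
    _ = 0 := this

/-- An irreducible complex character of degree 4 of a finite group is nonzero on
every 2-regular element (quasi 2-Steinberg). -/
theorem stmt_2 (G : Type) [Group G] [Fintype G] (V : FDRep ℂ G) (hV : Simple V)
    (hdeg : V.character 1 = 4) :
    ∀ g : G, ¬ (2 ∣ orderOf g) → V.character g ≠ 0 := by
  intro g hg2 hzero
  -- basic setup
  set n := orderOf g with hn
  have hn0 : n ≠ 0 := (orderOf_pos g).ne'
  have hodd : Odd n := Nat.odd_iff.mpr (Nat.two_dvd_ne_zero.mp hg2)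
  -- the dimension is 4
  have hfr : Module.finrank ℂ V = 4 := by
    have h1 := FDRep.char_one V
    rw [hdeg] at h1
    exact_mod_cast h1.symm
  -- move to matrices
  let b := Module.finBasis ℂ V
  set M : Matrix (Fin (Module.finrank ℂ V)) (Fin (Module.finrank ℂ V)) ℂ :=
    LinearMap.toMatrix b b (V.ρ g) with hM
  have hMn : M ^ n = 1 := by
    have : (V.ρ g) ^ n = 1 := by
      rw [← map_pow, hn, pow_orderOf_eq_one, map_one]
    calc M ^ n = LinearMap.toMatrix b b ((V.ρ g) ^ n) := by
          rw [hM]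
          induction n with
          | zero => simp
          | succ k ih => rw [pow_succ, pow_succ, ih, ← LinearMap.toMatrix_comp b b b]; rfl
      _ = 1 := by rw [this, LinearMap.toMatrix_one]
  have htrace : M.trace = 0 := by
    have : V.character g = LinearMap.trace ℂ V (V.ρ g) := rfl
    rw [this, LinearMap.trace_eq_matrix_trace ℂ b] at hzero
    exact hzero
  -- roots of the characteristic polynomial
  have hsplits : M.charpoly.Splits := IsAlgClosed.splits _
  have hsum : M.charpoly.roots.sum = 0 := by
    rw [← Matrix.trace_eq_sum_roots_charpoly]; exact htrace
  have hcardroots : Multiset.card M.charpoly.roots = 4 := by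
    rw [(Polynomial.splits_iff_card_roots).mp hsplits, Matrix.charpoly_natDegree_eq_dim,
      Fintype.card_fin, hfr]
  have hroot : ∀ μ ∈ M.charpoly.roots, μ ^ n = 1 := fun μ hμ =>
    aux_root_pow_eq_one M n hn0 hMn hμ
  -- extract the four roots
  have hlen : M.charpoly.roots.toList.length = 4 := by
    rw [Multiset.length_toList, hcardroots]
  obtain ⟨a, b', c, d, hlist⟩ : ∃ a b' c d, M.charpoly.roots.toList = [a, b', c, d] := by
    rcases hL : M.charpoly.roots.toList with _ | ⟨a, _ | ⟨b', _ | ⟨c, _ | ⟨d, _ | ⟨e, t⟩⟩⟩⟩⟩ <;>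
      simp [hL] at hlen ⊢
  have hcoe : (↑[a, b', c, d] : Multiset ℂ) = M.charpoly.roots := by
    rw [← hlist, Multiset.coe_toList]
  have hmem : ∀ x ∈ [a, b', c, d], x ^ n = 1 := by
    intro x hx
    apply hroot
    rw [← hcoe]
    exact_mod_cast hx
  have ha : a ^ n = 1 := hmem a (by simp)
  have hb : b' ^ n = 1 := hmem b' (by simp)
  have hc : c ^ n = 1 := hmem c (by simp)
  have hd : d ^ n = 1 := hmem d (by simp)
  have h1 : a + b' + c + d = 0 := by
    have : (↑[a, b', c, d] : Multiset ℂ).sum = 0 := by rw [hcoe]; exact hsum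
    simpa [add_assoc] using this
  -- Galois argument: sums of squares and fourth powers vanish too
  have h2 : a ^ 2 + b' ^ 2 + c ^ 2 + d ^ 2 = 0 :=
    aux_sq_sum n hodd hn0 a b' c d ha hb hc hd h1
  have h4 : a ^ 4 + b' ^ 4 + c ^ 4 + d ^ 4 = 0 := by
    have := aux_sq_sum n hodd hn0 (a ^ 2) (b' ^ 2) (c ^ 2) (d ^ 2)
      (by rw [← pow_mul, mul_comm, pow_mul, ha, one_pow])
      (by rw [← pow_mul, mul_comm, pow_mul, hb, one_pow])
      (by rw [← pow_mul, mul_comm, pow_mul, hc, one_pow])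
      (by rw [← pow_mul, mul_comm, pow_mul, hd, one_pow]) h2
    calc a ^ 4 + b' ^ 4 + c ^ 4 + d ^ 4
        = (a ^ 2) ^ 2 + (b' ^ 2) ^ 2 + (c ^ 2) ^ 2 + (d ^ 2) ^ 2 := by ring
      _ = 0 := this
  -- Newton's identities force the product of the roots to vanish
  have hprod : a * b' * c * d = 0 := by
    linear_combination
      (((a + b' + c + d) ^ 3 - 6 * (a + b' + c + d) * (a ^ 2 + b' ^ 2 + c ^ 2 + d ^ 2)
          + 8 * (a ^ 3 + b' ^ 3 + c ^ 3 + d ^ 3)) / 24) * h1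
      + ((a ^ 2 + b' ^ 2 + c ^ 2 + d ^ 2) / 8) * h2 - (1 / 4) * h4
  -- but the roots are roots of unity, hence nonzero
  have hane : a ≠ 0 := fun h => by simp [h, zero_pow hn0] at ha
  have hbne : b' ≠ 0 := fun h => by simp [h, zero_pow hn0] at hb
  have hcne : c ≠ 0 := fun h => by simp [h, zero_pow hn0] at hc
  have hdne : d ≠ 0 := fun h => by simp [h, zero_pow hn0] at hd
  exact (mul_ne_zero (mul_ne_zero (mul_ne_zero hane hbne) hcne) hdne) hprod
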